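/- Let K be the fraction field of a discrete valuation ring O. Then GL_n(K) = B(K) · GL_n(O), where B(K) is the subgroup of upper triangular invertible matrices: every g ∈ GL_n(K) can be written as g = b·k with b ∈ B(K) upper triangular and k ∈ GL_n(O). -/

import Mathlib

open Matrix

section aux

variable {O : Type*} [CommRing O] [IsDomain O] [IsDiscreteValuationRing O]

lemma exists_dvd_all {ι : Type*} [DecidableEq ι] (s : Finset ι) (hs : s.Nonempty) (f : ι → O) :
    ∃ j0 ∈ s, ∀ j ∈ s, f j0 ∣ f j := by
  classical
  induction s using Finset.induction_on with
  | empty => simp at hs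
  | @insert a s ha ih =>
    rcases s.eq_empty_or_nonempty with rfl | hne
    · exact ⟨a, by simp, by simp⟩
    · obtain ⟨j0, hj0, hdvd⟩ := ih hne
      rcases ValuationRing.dvd_total (f a) (f j0) with h | h
      · refine ⟨a, Finset.mem_insert_self _ _, fun j hj => ?_⟩
        rcases Finset.mem_insert.mp hj with rfl | hj
        · exact dvd_rfl
        · exact h.trans (hdvd j hj)
      · refine ⟨j0, Finset.mem_insert_of_mem hj0, fun j hj => ?_⟩
        rcases Finset.mem_insert.mp hj with rfl | hj
        · exact h
        · exact hdvd j hj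

lemma exists_triangularize (n : ℕ) (M : Matrix (Fin n) (Fin n) O) :
    ∃ U : GL (Fin n) O, ∀ i j : Fin n, j < i →
      (M * (U : Matrix (Fin n) (Fin n) O)) i j = 0 := by
  classical
  suffices h : ∀ t : ℕ, ∃ U : GL (Fin n) O, ∀ i j : Fin n, j < i → n - t ≤ (i : ℕ) →
      (M * (U : Matrix (Fin n) (Fin n) O)) i j = 0 by
    obtain ⟨U, hU⟩ := h n
    exact ⟨U, fun i j hij => hU i j hij (by omega)⟩
  intro t
  induction t with
  | zero =>
    exact ⟨1, fun i j hij hi => absurd hi (by omega)⟩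
  | succ t ih =>
    obtain ⟨U, hU⟩ := ih
    by_cases ht : n - (t + 1) = n - t
    · exact ⟨U, fun i j hij hi => hU i j hij (ht ▸ hi)⟩
    -- so n - (t+1) < n - t, hence r := n - (t+1) < n
    have hrn : n - (t + 1) < n := by omega
    set r : Fin n := ⟨n - (t + 1), hrn⟩ with hr
    set N : Matrix (Fin n) (Fin n) O := M * (U : Matrix (Fin n) (Fin n) O) with hN
    -- pivot
    obtain ⟨j0, hj0mem, hdvd⟩ := exists_dvd_all (Finset.univ.filter (fun j : Fin n => j ≤ r))
      ⟨r, by simp⟩ (fun j => N r j)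
    have hj0 : j0 ≤ r := (Finset.mem_filter.mp hj0mem).2
    have hdvd' : ∀ j : Fin n, j ≤ r → N r j0 ∣ N r j := fun j hj =>
      hdvd j (Finset.mem_filter.mpr ⟨Finset.mem_univ _, hj⟩)
    set σ : Equiv.Perm (Fin n) := Equiv.swap j0 r with hσ
    -- permutation unit
    set P : (Matrix (Fin n) (Fin n) O)ˣ :=
      { val := σ.toPEquiv.toMatrix
        inv := σ.symm.toPEquiv.toMatrix
        val_inv := by
          rw [← PEquiv.toMatrix_trans, ← Equiv.toPEquiv_trans]
          simp [PEquiv.toMatrix_refl]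
        inv_val := by
          rw [← PEquiv.toMatrix_trans, ← Equiv.toPEquiv_trans]
          simp [PEquiv.toMatrix_refl] } with hP
    set N' : Matrix (Fin n) (Fin n) O := N * (P : Matrix (Fin n) (Fin n) O) with hN'
    have hN'app : ∀ i j : Fin n, N' i j = N i (σ.symm j) := by
      intro i j
      rw [hN', hP]
      rw [PEquiv.mul_toMatrix_toPEquiv]
      rfl
    -- σ.symm = σ for swaps
    have hσsymm : σ.symm = σ := Equiv.symm_swap j0 r
    -- σ maps {≤ r} to {≤ r}
    have hσle : ∀ j : Fin n, j ≤ r → σ j ≤ r := by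
      intro j hj
      rw [hσ]
      rcases eq_or_ne j j0 with rfl | h1
      · simp
      rcases eq_or_ne j r with rfl | h2
      · simpa [Equiv.swap_apply_right] using hj0
      · rw [Equiv.swap_apply_of_ne_of_ne h1 h2]; exact hj
    -- coefficients
    have hc : ∀ j : Fin n, j < r → ∃ x : O, N' r j = N' r r * x := by
      intro j hj
      rw [hN'app, hN'app, hσsymm]
      have : σ r = j0 := Equiv.swap_apply_right j0 r
      rw [this]
      exact hdvd' (σ j) (hσle j hj.le)
    choose c hcspec using fun (j : Fin n) => fun (h : j < r) => hc j h
    set cc : Fin n → O := fun j => if h : j < r then c j h else 0 with hcc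
    set A : Matrix (Fin n) (Fin n) O :=
      Matrix.of (fun i j => if i = r ∧ j < r then cc j else 0) with hA
    have hA2 : A * A = 0 := by
      ext i j
      rw [Matrix.mul_apply]
      apply Finset.sum_eq_zero
      intro k _
      by_cases h1 : i = r ∧ k < r
      · have : ¬ (k = r ∧ j < r) := by
          rintro ⟨rfl, -⟩; exact absurd h1.2 (lt_irrefl _)
        simp [hA, this]
      · simp [hA, h1]
    set T : (Matrix (Fin n) (Fin n) O)ˣ :=
      { val := 1 - A
        inv := 1 + A
        val_inv := by
          have : (1 - A) * (1 + A) = 1 - A * A := by noncomm_ring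
          rw [this, hA2, sub_zero]
        inv_val := by
          have : (1 + A) * (1 - A) = 1 - A * A := by noncomm_ring
          rw [this, hA2, sub_zero] } with hT
    refine ⟨U * P * T, fun i j hij hi => ?_⟩
    have hval : ((U * P * T : (Matrix (Fin n) (Fin n) O)ˣ) : Matrix (Fin n) (Fin n) O)
        = (U : Matrix (Fin n) (Fin n) O) * (P : Matrix (Fin n) (Fin n) O)
          * (T : Matrix (Fin n) (Fin n) O) := rfl
    rw [hval, ← Matrix.mul_assoc, ← Matrix.mul_assoc, ← hN, ← hN']
    have hTval : (T : Matrix (Fin n) (Fin n) O) = 1 - A := rfl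
    rw [hTval, Matrix.mul_sub, Matrix.mul_one, Matrix.sub_apply]
    have hNA : (N' * A) i j = N' i r * (if j < r then cc j else 0) := by
      rw [Matrix.mul_apply]
      rw [Finset.sum_eq_single r]
      · by_cases h : j < r <;> simp [hA, h]
      · intro k _ hk
        have : ¬ (k = r ∧ j < r) := fun h => hk h.1
        simp [hA, this]
      · simp
    rw [hNA]
    -- case split on i
    rcases eq_or_lt_of_le (show (r : ℕ) ≤ (i : ℕ) from hi) with hieq | hilt
    · -- i = r
      have hir : i = r := Fin.ext hieq.symm
      subst hir
      have hjr : j < r := hij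
      rw [if_pos hjr]
      have hccj : cc j = c j hjr := by simp only [hcc]; exact dif_pos hjr
      rw [hccj, ← hcspec j hjr, sub_self]
    · -- r < i, so n - t ≤ i
      have hnti : n - t ≤ (i : ℕ) := by
        have h' : n - (t + 1) < (i : ℕ) := by simpa [hr] using hilt
        omega
      have hzero : ∀ l : Fin n, l < i → N i l = 0 := fun l hl => hU i l hl hnti
      have h1 : N' i j = 0 := by
        rw [hN'app, hσsymm]
        apply hzero
        rcases le_or_gt j r with hjle | hjgt
        · exact lt_of_le_of_lt (hσle j hjle) (Fin.lt_def.mpr hilt)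
        · have : σ j = j := by
            rw [hσ]
            exact Equiv.swap_apply_of_ne_of_ne (fun h => absurd (h ▸ hj0) (not_le.mpr hjgt))
              (fun h => absurd (h ▸ hjgt) (lt_irrefl r))
          rw [this]; exact hij
      have h2 : N' i r = 0 := by
        rw [hN'app, hσsymm]
        have : σ r = j0 := Equiv.swap_apply_right j0 r
        rw [this]
        exact hzero j0 (lt_of_le_of_lt hj0 (Fin.lt_def.mpr hilt))
      rw [h1, h2, zero_mul, sub_zero]

end aux

theorem iwasawa_decomposition_GL_dvr
    (O : Type*) [CommRing O] [IsDomain O] [IsDiscreteValuationRing O]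
    (n : ℕ) (g : GL (Fin n) (FractionRing O)) :
    ∃ b k : GL (Fin n) (FractionRing O),
      (∀ i j : Fin n, j < i → (b : Matrix (Fin n) (Fin n) (FractionRing O)) i j = 0) ∧
      (∀ i j : Fin n, ∃ x : O,
          (k : Matrix (Fin n) (Fin n) (FractionRing O)) i j = algebraMap O (FractionRing O) x) ∧
      (∀ i j : Fin n, ∃ x : O,
          ((k⁻¹ : GL (Fin n) (FractionRing O)) : Matrix (Fin n) (Fin n) (FractionRing O)) i j
            = algebraMap O (FractionRing O) x) ∧
      g = b * k := by
  classical
  set K := FractionRing O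
  -- common denominator
  obtain ⟨d, hd⟩ := IsLocalization.exist_integer_multiples_of_finite (nonZeroDivisors O)
    (fun p : Fin n × Fin n => (g : Matrix (Fin n) (Fin n) K) p.1 p.2)
  choose M hM using fun p : Fin n × Fin n => hd p
  set Mm : Matrix (Fin n) (Fin n) O := Matrix.of (fun i j => M (i, j)) with hMm
  obtain ⟨U, hU⟩ := exists_triangularize n Mm
  set φ : GL (Fin n) O →* GL (Fin n) K :=
    Units.map ((algebraMap O K).mapMatrix).toMonoidHom with hφ
  refine ⟨g * φ U, (φ U)⁻¹, ?_, ?_, ?_, ?_⟩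
  · intro i j hij
    have hdinj : Function.Injective (algebraMap O K) := IsFractionRing.injective O K
    have hdne : algebraMap O K (d : O) ≠ 0 := by
      intro h
      exact nonZeroDivisors.coe_ne_zero d (hdinj (by rw [h, map_zero]))
    have hcoe : ((g * φ U : GL (Fin n) K) : Matrix (Fin n) (Fin n) K)
        = (g : Matrix (Fin n) (Fin n) K)
          * ((U : Matrix (Fin n) (Fin n) O)).map (algebraMap O K) := rfl
    have key : algebraMap O K (d : O)
        * (((g : Matrix (Fin n) (Fin n) K)
            * ((U : Matrix (Fin n) (Fin n) O)).map (algebraMap O K)) i j) = 0 := by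
      rw [Matrix.mul_apply, Finset.mul_sum]
      have hterm : ∀ l : Fin n, algebraMap O K (d : O)
          * ((g : Matrix (Fin n) (Fin n) K) i l
              * (((U : Matrix (Fin n) (Fin n) O)).map (algebraMap O K)) l j)
          = algebraMap O K (Mm i l * (U : Matrix (Fin n) (Fin n) O) l j) := by
        intro l
        rw [_root_.map_mul, ← mul_assoc, Matrix.map_apply]
        congr 1
        have := hM (i, l)
        rw [Algebra.smul_def] at this
        exact this.symm
      rw [Finset.sum_congr rfl (fun l _ => hterm l), ← map_sum, ← Matrix.mul_apply,
        hU i j hij, map_zero]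
    rw [hcoe]
    exact (mul_eq_zero.mp key).resolve_left hdne
  · intro i j
    exact ⟨((U⁻¹ : GL (Fin n) O) : Matrix (Fin n) (Fin n) O) i j, rfl⟩
  · intro i j
    refine ⟨(U : Matrix (Fin n) (Fin n) O) i j, ?_⟩
    rw [inv_inv]
    rfl
  · rw [mul_assoc, mul_inv_cancel, mul_one]
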